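/- arXiv:1710.00294 — 3 statements merged into one kernel-verified Lean document; each statement's English description precedes it below -/
import Mathlib

section
/- Let A and B be finite abelian groups (written additively) with the same cardinality, and let φ : A →+ B and ψ : B →+ A be group homomorphisms such that ψ(φ(a)) = 2 • a for all a ∈ A and φ(ψ(b)) = 2 • b for all b ∈ B. Assume the kernel of φ has exactly 2 elements and the kernel of ψ has exactly 2 elements. Then 4 does not divide the cardinality of A if and only if both {a ∈ A : 2 • a = 0} and {b ∈ B : 2 • b = 0} have exactly 2 elements. -/
/-- Auxiliary: a subgroup of exponent dividing 2, containing a subgroup of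
cardinality 2, in a group whose cardinality is not divisible by 4, has
cardinality 2. -/
lemma aux_card_eq_two {G : Type*} [AddCommGroup G] [Fintype G]
    (K L : AddSubgroup G) (hLK : L ≤ K) (hL : Nat.card L = 2)
    (hK2 : ∀ x ∈ K, 2 • x = 0) (h4 : ¬ 4 ∣ Fintype.card G) :
    Nat.card K = 2 := by
  have h2 : (2 : ℕ) ∣ Nat.card K := by
    have := Nat.card_congr (AddSubgroup.addSubgroupOfEquivOfLe hLK).toEquiv
    rw [hL] at this
    rw [← this]
    exact AddSubgroup.card_addSubgroup_dvd_card _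
  have hdvd : Nat.card K ∣ Fintype.card G := by
    simpa [Nat.card_eq_fintype_card] using AddSubgroup.card_addSubgroup_dvd_card K
  -- every prime dividing Nat.card K is 2
  by_contra hne
  obtain ⟨m, hm⟩ := h2
  have hm1 : m ≠ 1 := by rintro rfl; simp at hm; exact hne hm
  have hm0 : m ≠ 0 := by
    rintro rfl
    simp at hm
    have : Finite K := inferInstance
    rw [Nat.card_eq_zero] at hm
    rcases hm with h | h
    · exact h.false ⟨0, K.zero_mem⟩
    · exact h.not_finite this
  have hmodd : ¬ 2 ∣ m := by
    intro ⟨k, hk⟩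
    exact h4 (dvd_trans ⟨k, by rw [hm, hk]; ring⟩ hdvd)
  -- minFac m is an odd prime dividing Nat.card K
  have hp : m.minFac.Prime := Nat.minFac_prime hm1
  haveI : Fact m.minFac.Prime := ⟨hp⟩
  have hpdvd : m.minFac ∣ Nat.card K := hm ▸ (Nat.minFac_dvd m).mul_left 2
  haveI : Fintype K := Fintype.ofFinite K
  rw [Nat.card_eq_fintype_card] at hpdvd
  obtain ⟨x, hx⟩ := exists_prime_addOrderOf_dvd_card m.minFac hpdvd
  have h2x : (2 : ℕ) • x = 0 := by
    ext
    push_cast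
    exact hK2 _ x.2
  have : addOrderOf x ∣ 2 := addOrderOf_dvd_of_nsmul_eq_zero h2x
  rw [hx] at this
  have : m.minFac = 2 := (Nat.prime_dvd_prime_iff_eq hp Nat.prime_two).mp this
  exact hmodd (this ▸ Nat.minFac_dvd m)

theorem not_four_dvd_card_iff_two_torsion_card_two
    {A B : Type*} [AddCommGroup A] [AddCommGroup B] [Fintype A] [Fintype B]
    (hcard : Fintype.card A = Fintype.card B)
    (φ : A →+ B) (ψ : B →+ A)
    (hψφ : ∀ a : A, ψ (φ a) = 2 • a)
    (hφψ : ∀ b : B, φ (ψ b) = 2 • b)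
    (hkφ : Nat.card φ.ker = 2)
    (hkψ : Nat.card ψ.ker = 2) :
    ¬ (4 ∣ Fintype.card A) ↔
      ({a : A | 2 • a = 0}.ncard = 2 ∧ {b : B | 2 • b = 0}.ncard = 2) := by
  set f : A →+ A := ψ.comp φ with hf
  set g : B →+ B := φ.comp ψ with hg
  have hfk : {a : A | 2 • a = 0} = (f.ker : Set A) := by
    ext a; simp [AddMonoidHom.mem_ker, hf, hψφ a]
  have hgk : {b : B | 2 • b = 0} = (g.ker : Set B) := by
    ext b; simp [AddMonoidHom.mem_ker, hg, hφψ b]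
  have hfn : {a : A | 2 • a = 0}.ncard = Nat.card f.ker := by
    rw [hfk, ← Nat.card_coe_set_eq, SetLike.coe_sort_coe]
  have hgn : {b : B | 2 • b = 0}.ncard = Nat.card g.ker := by
    rw [hgk, ← Nat.card_coe_set_eq, SetLike.coe_sort_coe]
  have hφf : φ.ker ≤ f.ker := by
    intro a ha
    rw [AddMonoidHom.mem_ker] at ha ⊢
    simp [hf, ha]
  have hψg : ψ.ker ≤ g.ker := by
    intro b hb
    rw [AddMonoidHom.mem_ker] at hb ⊢
    simp [hg, hb]
  rw [hfn, hgn]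
  constructor
  · intro h4
    have h4B : ¬ 4 ∣ Fintype.card B := hcard ▸ h4
    constructor
    · exact aux_card_eq_two f.ker φ.ker hφf hkφ
        (fun x hx => by rw [← hψφ x]; exact hx) h4
    · exact aux_card_eq_two g.ker ψ.ker hψg hkψ
        (fun x hx => by rw [← hφψ x]; exact hx) h4B
  · rintro ⟨hA2, hB2⟩ h4
    -- f.ker = φ.ker and g.ker = ψ.ker
    have hfker : φ.ker = f.ker :=
      AddSubgroup.eq_of_le_of_card_ge hφf (by rw [hkφ, hA2])
    have hgker : ψ.ker = g.ker :=
      AddSubgroup.eq_of_le_of_card_ge hψg (by rw [hkψ, hB2])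
    -- card of range of f
    have hiso : Nat.card A = Nat.card (A ⧸ f.ker) * Nat.card f.ker :=
      AddSubgroup.card_eq_card_quotient_mul_card_addSubgroup f.ker
    have hquot : Nat.card (A ⧸ f.ker) = Nat.card f.range :=
      Nat.card_congr (QuotientAddGroup.quotientKerEquivRange f).toEquiv
    have hrange2 : 2 ∣ Nat.card f.range := by
      obtain ⟨k, hk⟩ := h4
      have : Nat.card A = Nat.card f.range * 2 := by
        rw [hiso, hquot, hA2]
      have hk' : Nat.card f.range * 2 = 4 * k := by
        rw [← this, Nat.card_eq_fintype_card, hk]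
      exact ⟨k, by omega⟩
    -- Cauchy on f.range
    haveI : Fintype f.range := Fintype.ofFinite f.range
    rw [Nat.card_eq_fintype_card] at hrange2
    obtain ⟨x, hx⟩ := exists_prime_addOrderOf_dvd_card 2 hrange2
    have hxne : (x : A) ≠ 0 := by
      intro h
      have : x = 0 := by ext; exact h
      rw [this, addOrderOf_zero] at hx
      omega
    have h2x : 2 • (x : A) = 0 := by
      have : (2 : ℕ) • x = 0 := by rw [← hx]; exact addOrderOf_nsmul_eq_zero x
      have := congrArg (Subtype.val) this
      simpa using this
    -- x ∈ f.ker = φ.ker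
    have hxφ : φ (x : A) = 0 := by
      have hmem : (x : A) ∈ f.ker := by
        have : ψ (φ (x : A)) = 0 := by rw [hψφ]; exact h2x
        exact this
      rw [← hfker] at hmem
      exact hmem
    -- x = 2 • a for some a
    obtain ⟨a, ha⟩ := x.2
    have ha' : 2 • a = (x : A) := by rw [← ha]; exact (hψφ a).symm
    -- φ a ∈ g.ker = ψ.ker
    have hφa : φ a ∈ g.ker := by
      have : φ (ψ (φ a)) = 0 := by rw [hψφ, ha']; exact hxφ
      exact this
    rw [← hgker, AddMonoidHom.mem_ker] at hφa
    have : (x : A) = 0 := by rw [← ha', ← hψφ a, hφa]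
    exact hxne this
end

section
/- Let A and B be abelian groups (written additively) with B finite, and let φ : A →+ B and ψ : B →+ A be group homomorphisms such that ψ(φ(a)) = 2 • a for all a ∈ A and φ(ψ(b)) = 2 • b for all b ∈ B. Assume the kernel of φ has exactly 2 elements, the kernel of ψ has exactly 2 elements, and the set {a ∈ A : 2 • a = 0} has exactly 2 elements. If A contains an element of additive order 4, then the set {b ∈ B : 2 • b = 0} has at least 4 elements. -/
theorem two_torsion_of_image_ge_four
    {A B : Type*} [AddCommGroup A] [AddCommGroup B] [Finite B]
    (φ : A →+ B) (ψ : B →+ A)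
    (hψφ : ∀ a : A, ψ (φ a) = 2 • a)
    (hφψ : ∀ b : B, φ (ψ b) = 2 • b)
    (hkφ : Nat.card φ.ker = 2)
    (hkψ : Nat.card ψ.ker = 2)
    (h2 : {a : A | 2 • a = 0}.ncard = 2)
    (h4 : ∃ a : A, addOrderOf a = 4) :
    4 ≤ {b : B | 2 • b = 0}.ncard := by
  classical
  obtain ⟨a, ha⟩ := h4
  -- 2 • a ≠ 0
  have ha2 : (2 : ℕ) • a ≠ 0 := by
    intro h
    have := addOrderOf_dvd_of_nsmul_eq_zero h
    rw [ha] at this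
    omega
  -- ker φ = 2-torsion of A
  have hTfin : {x : A | 2 • x = 0}.Finite := by
    apply Set.finite_of_ncard_ne_zero; rw [h2]; norm_num
  have hsub : (φ.ker : Set A) ⊆ {x : A | 2 • x = 0} := by
    intro x hx
    have : φ x = 0 := hx
    have h := hψφ x
    rw [this, map_zero] at h
    exact h.symm
  have hkercard : (φ.ker : Set A).ncard = 2 := by
    rw [← Nat.card_coe_set_eq]
    simpa using hkφ
  have hker : (φ.ker : Set A) = {x : A | 2 • x = 0} :=
    Set.eq_of_subset_of_ncard_le hsub (by rw [h2, hkercard]) hTfin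
  -- φ a ≠ 0
  have hφa : φ a ≠ 0 := by
    intro h
    have : a ∈ (φ.ker : Set A) := h
    rw [hker] at this
    exact ha2 this
  -- 2 • φ a = 0
  have h2φa : (2 : ℕ) • φ a = 0 := by
    have h4a : (2 : ℕ) • ((2 : ℕ) • a) = 0 := by
      rw [smul_smul, ← addOrderOf_dvd_iff_nsmul_eq_zero, ha]
      norm_num
    have : (2 : ℕ) • a ∈ (φ.ker : Set A) := by rw [hker]; exact h4a
    have hz : φ ((2 : ℕ) • a) = 0 := this
    rwa [map_nsmul] at hz
  -- nonzero element of ker ψ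
  have : Nontrivial ψ.ker := by
    rw [← Finite.one_lt_card_iff_nontrivial, hkψ]; norm_num
  obtain ⟨⟨t, htk⟩, ht0⟩ := exists_ne (0 : ψ.ker)
  have ht : t ≠ 0 := by simpa [Subtype.ext_iff] using ht0
  have hψt : ψ t = 0 := htk
  have h2t : (2 : ℕ) • t = 0 := by
    have := hφψ t
    rw [hψt, map_zero] at this
    exact this.symm
  -- φ a ≠ t
  have hne : φ a ≠ t := by
    intro h
    have := hψφ a
    rw [h, hψt] at this
    exact ha2 this.symm
  -- assemble four elements
  set F : Finset B := {0, φ a, t, φ a + t} with hF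
  have hFcard : F.card = 4 := by
    have h1 : φ a + t ≠ 0 := by
      intro h
      apply hne
      have h' : φ a = -t := by linear_combination (norm := abel_nf) h
      have htt : t + t = 0 := by simpa [two_nsmul] using h2t
      rw [h', neg_eq_of_add_eq_zero_left htt]
    have h2' : φ a + t ≠ φ a := by simpa using ht
    have h3 : φ a + t ≠ t := by simpa using hφa
    simp only [hF, Finset.card_insert_of_notMem, Finset.mem_insert, Finset.mem_singleton]
    rw [Finset.card_insert_of_notMem, Finset.card_insert_of_notMem,
      Finset.card_insert_of_notMem, Finset.card_singleton]
    · simp [hne.symm, Ne.symm h3]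
    · simp [hφa.symm, hne, Ne.symm h2']
    · simp [Ne.symm ht, Ne.symm hφa, Ne.symm h1]
  have hFsub : (F : Set B) ⊆ {b : B | 2 • b = 0} := by
    intro b hb
    simp only [hF, Finset.coe_insert, Set.mem_insert_iff, Finset.coe_singleton,
      Set.mem_singleton_iff] at hb
    rcases hb with rfl | rfl | rfl | rfl
    · simp
    · exact h2φa
    · exact h2t
    · simp only [Set.mem_setOf_eq, smul_add, h2φa, h2t, add_zero]
  calc 4 = (F : Set B).ncard := by rw [Set.ncard_coe_finset, hFcard]
    _ ≤ _ := Set.ncard_le_ncard hFsub (Set.toFinite _)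
end

section
/- Let F be a finite field of odd characteristic, let e, b, c ∈ F, and let W be the Weierstrass curve over F with a₁ = 0, a₃ = 0, a₂ = b - e, a₄ = c - e·b, a₆ = -e·c (so that the affine equation of W is y² = (x - e)(x² + bx + c)). Assume the discriminant W.Δ is nonzero. Then the set {P ∈ W.Point : 2 • P = 0} has exactly 2 elements if and only if b² - 4c is not a square in F. -/
open WeierstrassCurve.Affine

open Classical in
private lemma two_torsion_aux {F : Type*} [Field F] (h2 : (2 : F) ≠ 0)
    (e b c : F) (W : WeierstrassCurve.Affine F)
    (hW : W = { a₁ := 0, a₂ := b - e, a₃ := 0, a₄ := c - e * b, a₆ := -(e * c) })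
    {x y : F} (h : W.Nonsingular x y) :
    2 • WeierstrassCurve.Affine.Point.some _ _ h = 0 ↔ y = 0 := by
  have hneg : W.negY x y = -y := by
    simp [WeierstrassCurve.Affine.negY, hW]
  constructor
  · intro hP
    by_contra hy
    have hy' : y ≠ W.negY x y := by
      rw [hneg]
      intro h'
      apply hy
      have : 2 * y = 0 := by linear_combination h'
      rcases mul_eq_zero.mp this with h'' | h''
      · exact absurd h'' h2
      · exact h''
    rw [two_nsmul] at hP
    rw [WeierstrassCurve.Affine.Point.add_of_Y_ne hy'] at hP
    exact WeierstrassCurve.Affine.Point.some_ne_zero _ hP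
  · intro hy
    rw [two_nsmul]
    exact WeierstrassCurve.Affine.Point.add_self_of_Y_eq (by rw [hneg, hy, neg_zero])

open Classical in
theorem two_torsion_card_two_iff_not_isSquare_discrim
    {F : Type*} [Field F] [Fintype F] (hchar : ringChar F ≠ 2)
    (e b c : F)
    (W : WeierstrassCurve.Affine F)
    (hW : W = { a₁ := 0, a₂ := b - e, a₃ := 0, a₄ := c - e * b, a₆ := -(e * c) })
    (hΔ : W.Δ ≠ 0) :
    {P : W.Point | 2 • P = 0}.ncard = 2 ↔ ¬ IsSquare (b ^ 2 - 4 * c) := by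
  have h2 : (2 : F) ≠ 0 := Ring.two_ne_zero hchar
  have hΔfac : W.Δ = 16 * (b ^ 2 - 4 * c) * (e ^ 2 + b * e + c) ^ 2 := by
    subst hW
    simp only [WeierstrassCurve.Δ, WeierstrassCurve.b₂, WeierstrassCurve.b₄,
      WeierstrassCurve.b₆, WeierstrassCurve.b₈]
    ring
  have hdisc : b ^ 2 - 4 * c ≠ 0 := by
    intro h; apply hΔ; rw [hΔfac, h]; ring
  have hquad : e ^ 2 + b * e + c ≠ 0 := by
    intro h; apply hΔ; rw [hΔfac, h]; ring
  -- equation at y = 0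
  have hEq0 : ∀ x : F, W.Equation x 0 ↔ (x - e) * (x ^ 2 + b * x + c) = 0 := by
    intro x
    rw [WeierstrassCurve.Affine.equation_iff, hW]
    constructor <;> intro h <;> [skip; skip] <;> linear_combination -h
  -- nonsingularity at roots
  have hns : ∀ x : F, (x - e) * (x ^ 2 + b * x + c) = 0 → W.Nonsingular x 0 := fun x hx =>
    (equation_iff_nonsingular_of_Δ_ne_zero hΔ).mp ((hEq0 x).mpr hx)
  have hnse : W.Nonsingular e 0 := hns e (by ring)
  -- characterization of membership
  have hmem : ∀ P : W.Point, 2 • P = 0 ↔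
      P = 0 ∨ ∃ x : F, ∃ h : W.Nonsingular x 0,
        (x - e) * (x ^ 2 + b * x + c) = 0 ∧ P = .some _ _ h := by
    intro P
    cases P with
    | zero =>
      rw [show (WeierstrassCurve.Affine.Point.zero : W.Point) = 0 from rfl]
      simp
    | some x y h =>
      rw [two_torsion_aux h2 e b c W hW h]
      constructor
      · rintro rfl
        have hx : (x - e) * (x ^ 2 + b * x + c) = 0 := (hEq0 x).mp ((W.nonsingular_iff x 0).mp h).1
        exact Or.inr ⟨x, h, hx, rfl⟩
      · rintro (h' | ⟨x', h', hx', heq⟩)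
        · exact absurd h' (WeierstrassCurve.Affine.Point.some_ne_zero h)
        · cases heq; rfl
  by_cases hsq : IsSquare (b ^ 2 - 4 * c)
  · -- square case: 4 points
    simp only [hsq, not_true, iff_false]
    obtain ⟨s, hs⟩ := hsq
    have hs0 : s ≠ 0 := fun h => hdisc (by rw [hs, h, mul_zero])
    set x₁ : F := (-b + s) / 2 with hx₁def
    set x₂ : F := (-b - s) / 2 with hx₂def
    have hr₁ : x₁ ^ 2 + b * x₁ + c = 0 := by
      rw [hx₁def]
      field_simp
      linear_combination (-1 : F) * hs
    have hr₂ : x₂ ^ 2 + b * x₂ + c = 0 := by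
      rw [hx₂def]
      field_simp
      linear_combination (-1 : F) * hs
    have hx₁e : x₁ ≠ e := fun h => hquad (by rw [← h]; linear_combination hr₁)
    have hx₂e : x₂ ≠ e := fun h => hquad (by rw [← h]; linear_combination hr₂)
    have hx₁₂ : x₁ ≠ x₂ := by
      intro h
      apply hs0
      have : 2 * s = 0 := by
        rw [hx₁def, hx₂def] at h
        field_simp at h
        linear_combination h
      rcases mul_eq_zero.mp this with h' | h'
      · exact absurd h' h2
      · exact h'
    have hns₁ : W.Nonsingular x₁ 0 := hns x₁ (by rw [hr₁]; ring)
    have hns₂ : W.Nonsingular x₂ 0 := hns x₂ (by rw [hr₂]; ring)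
    have hset : {P : W.Point | 2 • P = 0} =
        {0, .some _ _ hnse, .some _ _ hns₁, .some _ _ hns₂} := by
      ext P
      simp only [Set.mem_setOf_eq, hmem P, Set.mem_insert_iff, Set.mem_singleton_iff]
      constructor
      · rintro (rfl | ⟨x, h, hx, rfl⟩)
        · exact Or.inl rfl
        · rcases mul_eq_zero.mp hx with hx | hx
          · have : x = e := by linear_combination hx
            subst this
            exact Or.inr (Or.inl rfl)
          · have : (x - x₁) * (x - x₂) = 0 := by
              rw [hx₁def, hx₂def]
              field_simp
              linear_combination 4 * hx + hs
            rcases mul_eq_zero.mp this with hx' | hx'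
            · have : x = x₁ := by linear_combination hx'
              subst this
              exact Or.inr (Or.inr (Or.inl rfl))
            · have : x = x₂ := by linear_combination hx'
              subst this
              exact Or.inr (Or.inr (Or.inr rfl))
      · rintro (rfl | rfl | rfl | rfl)
        · exact Or.inl rfl
        · exact Or.inr ⟨e, hnse, by ring, rfl⟩
        · exact Or.inr ⟨x₁, hns₁, by rw [hr₁]; ring, rfl⟩
        · exact Or.inr ⟨x₂, hns₂, by rw [hr₂]; ring, rfl⟩
    rw [hset]
    have d₁ : (0 : W.Point) ≠ .some _ _ hnse := fun h => (WeierstrassCurve.Affine.Point.some_ne_zero hnse) h.symm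
    have d₂ : (0 : W.Point) ≠ .some _ _ hns₁ := fun h => (WeierstrassCurve.Affine.Point.some_ne_zero hns₁) h.symm
    have d₃ : (0 : W.Point) ≠ .some _ _ hns₂ := fun h => (WeierstrassCurve.Affine.Point.some_ne_zero hns₂) h.symm
    have d₄ : (WeierstrassCurve.Affine.Point.some _ _ hnse) ≠ .some _ _ hns₁ := by
      intro h
      rw [WeierstrassCurve.Affine.Point.some.injEq] at h
      exact hx₁e h.1.symm
    have d₅ : (WeierstrassCurve.Affine.Point.some _ _ hnse) ≠ .some _ _ hns₂ := by
      intro h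
      rw [WeierstrassCurve.Affine.Point.some.injEq] at h
      exact hx₂e h.1.symm
    have d₆ : (WeierstrassCurve.Affine.Point.some _ _ hns₁) ≠ .some _ _ hns₂ := by
      intro h
      rw [WeierstrassCurve.Affine.Point.some.injEq] at h
      exact hx₁₂ h.1
    rw [Set.ncard_insert_of_notMem (by simp [d₁, d₂, d₃]) (Set.toFinite _),
      Set.ncard_insert_of_notMem (by simp [d₄, d₅]) (Set.toFinite _),
      Set.ncard_pair d₆]
    omega
  · -- non-square case: 2 points
    simp only [hsq, not_false_iff, iff_true]
    have hset : {P : W.Point | 2 • P = 0} = {0, .some _ _ hnse} := by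
      ext P
      simp only [Set.mem_setOf_eq, hmem P, Set.mem_insert_iff, Set.mem_singleton_iff]
      constructor
      · rintro (rfl | ⟨x, h, hx, rfl⟩)
        · exact Or.inl rfl
        · rcases mul_eq_zero.mp hx with hx | hx
          · have : x = e := by linear_combination hx
            subst this
            exact Or.inr rfl
          · exact absurd ⟨2 * x + b, by linear_combination -4 * hx⟩ hsq
      · rintro (rfl | rfl)
        · exact Or.inl rfl
        · exact Or.inr ⟨e, hnse, by ring, rfl⟩
    rw [hset, Set.ncard_pair (fun h => (WeierstrassCurve.Affine.Point.some_ne_zero hnse) h.symm)]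
end
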